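/- arXiv:cond-mat/0205455 — 2 statements merged into one kernel-verified Lean document; each statement's English description precedes it below -/
import Mathlib

section
/- For every integer L ≥ 2, every β ≥ 0 and every ε with 0 < ε ≤ 1/2, the toy-model partition function satisfies the 'ordered' lower bound Z_Λ(β,ε) ≥ (ε/2)^{L²} · exp(2βL²). -/
open MeasureTheory Real

/-- The site space: the discrete torus of side `L`. -/
abbrev Torus (L : ℕ) := ZMod L × ZMod L

/-- A configuration of the toy model: one circle-valued spin per site. -/
abbrev Config (L : ℕ) := Torus L → AddCircle (1 : ℝ)

/-- The two unit coordinate vectors `e₁ = (1,0)` and `e₂ = (0,1)`. -/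
def coordVec (L : ℕ) : Fin 2 → Torus L
  | 0 => (1, 0)
  | 1 => (0, 1)

/-- The product of normalized Haar measures on the spins. -/
noncomputable def toyMeasure (L : ℕ) [NeZero L] : Measure (Config L) :=
  Measure.pi fun _ => (AddCircle.haarAddCircle : Measure (AddCircle (1 : ℝ)))

/-- A bond `(x, x + eᵢ)` of the configuration `φ` is `ε`-ordered when
`‖φ x - φ (x + eᵢ)‖ ≤ ε/2`, where `‖·‖` is the quotient norm on `ℝ/ℤ`. -/
def IsOrderedBond (L : ℕ) [NeZero L] (ε : ℝ) (φ : Config L) (x : Torus L) (i : Fin 2) : Prop :=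
  ‖φ x - φ (x + coordVec L i)‖ ≤ ε / 2

noncomputable instance (L : ℕ) [NeZero L] (ε : ℝ) (φ : Config L) (x : Torus L) (i : Fin 2) :
    Decidable (IsOrderedBond L ε φ x i) :=
  Real.decidableLE _ _

/-- The toy Hamiltonian: minus the number of `ε`-ordered bonds. -/
noncomputable def toyH (L : ℕ) [NeZero L] (ε : ℝ) (φ : Config L) : ℝ :=
  -(∑ x : Torus L, ∑ i : Fin 2, if IsOrderedBond L ε φ x i then (1 : ℝ) else 0)

/-- The toy-model partition function. -/
noncomputable def toyZ (L : ℕ) [NeZero L] (β ε : ℝ) : ℝ :=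
  ∫ φ, Real.exp (-β * toyH L ε φ) ∂(toyMeasure L)

section aux
variable (L : ℕ) [NeZero L] (β ε : ℝ)

lemma card_torus : Fintype.card (Torus L) = L ^ 2 := by
  simp [ZMod.card, sq]

lemma toyH_bounds (φ : Config L) : -(2 * (L:ℝ)^2) ≤ toyH L ε φ ∧ toyH L ε φ ≤ 0 := by
  constructor
  · rw [toyH, neg_le_neg_iff]
    calc (∑ x : Torus L, ∑ i : Fin 2, if IsOrderedBond L ε φ x i then (1 : ℝ) else 0)
        ≤ ∑ x : Torus L, ∑ i : Fin 2, (1:ℝ) := by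
          refine Finset.sum_le_sum fun x _ => Finset.sum_le_sum fun i _ => ?_
          split <;> norm_num
      _ = 2 * (L:ℝ)^2 := by
          simp [Finset.card_univ, card_torus]; ring
  · rw [toyH, neg_nonpos]
    refine Finset.sum_nonneg fun x _ => Finset.sum_nonneg fun i _ => ?_
    split <;> norm_num

lemma toyH_measurable : Measurable (toyH L ε) := by
  apply Measurable.neg
  apply Finset.measurable_sum
  intro x _
  apply Finset.measurable_sum
  intro i _
  have hc : Continuous fun φ : Config L => ‖φ x - φ (x + coordVec L i)‖ :=
    (((continuous_apply x).sub (continuous_apply (x + coordVec L i))).norm)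
  have hs : MeasurableSet {φ : Config L | IsOrderedBond L ε φ x i} :=
    measurableSet_le hc.measurable measurable_const
  exact Measurable.ite hs measurable_const measurable_const

end aux

/-- the 'ordered' lower bound on the toy-model partition function. -/

theorem toy_ordered_lower_bound (L : ℕ) (hL : 2 ≤ L) (β ε : ℝ)
    (hβ : 0 ≤ β) (hε : 0 < ε) (hε' : ε ≤ 1 / 2) :
    haveI : NeZero L := ⟨by omega⟩
    toyZ L β ε ≥ (ε / 2) ^ (L ^ 2) * Real.exp (2 * β * L ^ 2) := by
  haveI : NeZero L := ⟨by omega⟩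
  haveI : Fact ((0:ℝ) < 1) := ⟨one_pos⟩
  set f : Config L → ℝ := fun φ => Real.exp (-β * toyH L ε φ) with hf
  set B : Set (AddCircle (1:ℝ)) := Metric.closedBall 0 (ε/4) with hB
  set A : Set (Config L) := Set.univ.pi (fun _ => B) with hA
  have hBmeas : MeasurableSet B := Metric.isClosed_closedBall.measurableSet
  have hAmeas : MeasurableSet A := MeasurableSet.univ_pi fun _ => hBmeas
  -- measure of B
  have hμB : (AddCircle.haarAddCircle : Measure (AddCircle (1:ℝ))) B
      = ENNReal.ofReal (ε/2) := by
    have h1 : (volume : Measure (AddCircle (1:ℝ))) B = ENNReal.ofReal (ε/2) := by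
      rw [hB, AddCircle.volume_closedBall]
      congr 1
      rw [min_eq_right (by linarith)]
      ring
    have h2 : (volume : Measure (AddCircle (1:ℝ))) = AddCircle.haarAddCircle := by
      rw [AddCircle.volume_eq_smul_haarAddCircle]
      simp
    rw [← h2, h1]
  have hμA : toyMeasure L A = ENNReal.ofReal (ε/2) ^ (L^2) := by
    rw [hA, toyMeasure, Measure.pi_pi]
    simp [hμB, Finset.card_univ, card_torus]
    rw [← sq]
  -- f is constant on A
  have hfA : ∀ φ ∈ A, f φ = Real.exp (2 * β * (L:ℝ)^2) := by
    intro φ hφ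
    have hφ' : ∀ x : Torus L, ‖φ x‖ ≤ ε/4 := by
      intro x
      have := hφ x (Set.mem_univ x)
      simpa [hB, Metric.mem_closedBall, dist_zero_right] using this
    have hH : toyH L ε φ = -(2 * (L:ℝ)^2) := by
      rw [toyH]
      have : ∀ x : Torus L, ∀ i : Fin 2,
          (if IsOrderedBond L ε φ x i then (1:ℝ) else 0) = 1 := by
        intro x i
        rw [if_pos]
        calc ‖φ x - φ (x + coordVec L i)‖ ≤ ‖φ x‖ + ‖φ (x + coordVec L i)‖ := norm_sub_le _ _
          _ ≤ ε/4 + ε/4 := add_le_add (hφ' _) (hφ' _)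
          _ = ε/2 := by ring
      simp only [this]
      simp [Finset.card_univ, card_torus]
      ring
    rw [hf]
    simp only [hH]
    ring_nf
  -- integrability
  have hfm : Measurable f := (Real.measurable_exp.comp ((toyH_measurable L ε).const_mul (-β)))
  have hfnn : ∀ φ, 0 ≤ f φ := fun φ => (Real.exp_pos _).le
  have hbound : ∀ φ, ‖f φ‖ ≤ Real.exp (2 * β * (L:ℝ)^2) := by
    intro φ
    rw [Real.norm_eq_abs, abs_of_pos (Real.exp_pos _), Real.exp_le_exp]
    have := (toyH_bounds L ε φ).1
    nlinarith
  haveI : IsProbabilityMeasure (toyMeasure L) := by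
    rw [toyMeasure]; infer_instance
  have hint : Integrable f (toyMeasure L) := by
    refine (integrable_const (Real.exp (2 * β * (L:ℝ)^2))).mono'
      hfm.aestronglyMeasurable (Filter.Eventually.of_forall hbound)
  -- chain
  have h1 : ∫ φ in A, f φ ∂(toyMeasure L) ≤ ∫ φ, f φ ∂(toyMeasure L) :=
    setIntegral_le_integral hint (Filter.Eventually.of_forall hfnn)
  have h2 : ∫ φ in A, f φ ∂(toyMeasure L)
      = (toyMeasure L A).toReal * Real.exp (2 * β * (L:ℝ)^2) := by
    rw [setIntegral_congr_fun hAmeas hfA, setIntegral_const, smul_eq_mul, Measure.real]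
  have h3 : (toyMeasure L A).toReal = (ε/2) ^ (L^2) := by
    rw [hμA, ← ENNReal.ofReal_pow (by linarith), ENNReal.toReal_ofReal (by positivity)]
  rw [ge_iff_le, toyZ]
  calc (ε / 2) ^ (L ^ 2) * Real.exp (2 * β * (L:ℝ) ^ 2)
      = ∫ φ in A, f φ ∂(toyMeasure L) := by rw [h2, h3]
    _ ≤ ∫ φ, f φ ∂(toyMeasure L) := h1
end

section
/- There exists a constant c ≥ 0 with the following property. For every integer L ≥ 4 divisible by 4 and every ε with 0 < ε < 1/4, the μ-measure of the set A^# of configurations φ such that every bond in E₀₁ is ε-ordered and every bond in E₂₃ is ε-disordered satisfies μ(A^#) ≤ ε^{(3/4)L² − cL}. -/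
open MeasureTheory Real

/-- The residue `(x₁ + x₂) mod 4` of a site of the torus, well defined when `4 ∣ L`. -/
def residue4 (L : ℕ) (h : (4 : ℕ) ∣ L) (x : Torus L) : ZMod 4 :=
  ZMod.castHom h (ZMod 4) (x.1 + x.2)

/-- A bond `(x, x + eᵢ)` belongs to `E₀₁` iff `(x₁ + x₂) mod 4 ∈ {0, 1}`. -/
def InE01 (L : ℕ) (h : (4 : ℕ) ∣ L) (x : Torus L) : Prop :=
  residue4 L h x = 0 ∨ residue4 L h x = 1

/-- The chessboard event `A^#`: every bond of `E₀₁` is `ε`-ordered and every bond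
of `E₂₃` is `ε`-disordered. -/
def Asharp (L : ℕ) [NeZero L] (h : (4 : ℕ) ∣ L) (ε : ℝ) : Set (Config L) :=
  {φ | ∀ x : Torus L, ∀ i : Fin 2,
    (InE01 L h x → IsOrderedBond L ε φ x i) ∧ (¬ InE01 L h x → ¬ IsOrderedBond L ε φ x i)}


section AuxProof
open Set

noncomputable section


lemma haar_ball_measure (c : AddCircle (1:ℝ)) {ε : ℝ} (hε0 : 0 ≤ ε) (hε1 : ε ≤ 1) :
    (AddCircle.haarAddCircle : Measure (AddCircle (1:ℝ))) {a | ‖a - c‖ ≤ ε/2}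
      = ENNReal.ofReal ε := by
  have h1 : {a : AddCircle (1:ℝ) | ‖a - c‖ ≤ ε/2} = Metric.closedBall c (ε/2) := by
    ext a; simp [Metric.mem_closedBall, dist_eq_norm]
  have h2 : (volume : Measure (AddCircle (1:ℝ))) = AddCircle.haarAddCircle := by
    rw [AddCircle.volume_eq_smul_haarAddCircle]; simp
  rw [h1, ← h2, AddCircle.volume_closedBall]
  congr 1
  rw [show 2 * (ε/2) = ε by ring, min_eq_right hε1]

lemma meas_pair_set {ι : Type} [Fintype ι] (a b : ι) (c : ℝ) :
    MeasurableSet {φ : ι → AddCircle (1:ℝ) | ‖φ a - φ b‖ ≤ c} := by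
  have : Measurable fun φ : ι → AddCircle (1:ℝ) => ‖φ a - φ b‖ :=
    ((measurable_pi_apply a).sub (measurable_pi_apply b)).norm
  exact measurableSet_le this measurable_const

lemma core_bound (ε : ℝ) (hε0 : 0 ≤ ε) (hε1 : ε ≤ 1) :
    ∀ (n : ℕ) (ι : Type) [Fintype ι] [DecidableEq ι] (J : Type) [Fintype J]
      (v w : J → ι) (ρ : J → ℕ),
      Fintype.card J = n → Function.Injective v →
      (∀ k k', ρ k ≤ ρ k' → v k ≠ w k') →
      Measure.pi (fun _ : ι => (AddCircle.haarAddCircle : Measure (AddCircle (1:ℝ))))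
        {φ : ι → AddCircle (1:ℝ) | ∀ k, ‖φ (v k) - φ (w k)‖ ≤ ε/2}
        ≤ ENNReal.ofReal ε ^ n := by
  intro n
  induction n with
  | zero =>
    intro ι _ _ J _ v w ρ hcard hv hvw
    haveI : IsEmpty J := Fintype.card_eq_zero_iff.mp hcard
    have : {φ : ι → AddCircle (1:ℝ) | ∀ k, ‖φ (v k) - φ (w k)‖ ≤ ε/2} = univ :=
      eq_univ_of_forall fun φ k => isEmptyElim k
    rw [this, pow_zero]
    exact le_of_eq (measure_univ)
  | succ n IH =>
    intro ι _ _ J _ v w ρ hcard hv hvw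
    haveI : Nonempty J := Fintype.card_pos_iff.mp (by omega)
    obtain ⟨k0, -, hk0⟩ := Finset.exists_min_image Finset.univ ρ ⟨Classical.arbitrary J, Finset.mem_univ _⟩
    have hk0' : ∀ k, ρ k0 ≤ ρ k := fun k => hk0 k (Finset.mem_univ k)
    set i0 : ι := v k0 with hi0
    classical
    set p : ι → Prop := fun i => i ≠ i0 with hp
    -- measurable equivalence splitting off coordinate i0
    set μ : Measure (ι → AddCircle (1:ℝ)) :=
      Measure.pi (fun _ : ι => (AddCircle.haarAddCircle : Measure (AddCircle (1:ℝ)))) with hμ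
    set μ₁ : Measure ({i // p i} → AddCircle (1:ℝ)) :=
      Measure.pi (fun _ => (AddCircle.haarAddCircle : Measure (AddCircle (1:ℝ)))) with hμ₁
    set μ₂ : Measure ({i // ¬ p i} → AddCircle (1:ℝ)) :=
      Measure.pi (fun _ => (AddCircle.haarAddCircle : Measure (AddCircle (1:ℝ)))) with hμ₂
    set e := MeasurableEquiv.piEquivPiSubtypeProd (fun _ : ι => AddCircle (1:ℝ)) p with he
    have hmp : MeasurePreserving e μ (μ₁.prod μ₂) :=
      measurePreserving_piEquivPiSubtypeProd _ p
    set S := {φ : ι → AddCircle (1:ℝ) | ∀ k, ‖φ (v k) - φ (w k)‖ ≤ ε/2} with hS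
    have hSm : MeasurableSet S := by
      have : S = ⋂ k, {φ : ι → AddCircle (1:ℝ) | ‖φ (v k) - φ (w k)‖ ≤ ε/2} := by
        ext φ; simp [hS]
      rw [this]
      exact MeasurableSet.iInter fun k => meas_pair_set _ _ _
    -- the subtype data
    have hwk0 : p (w k0) := fun h => hvw k0 k0 le_rfl h.symm
    set w0 : {i // p i} := ⟨w k0, hwk0⟩ with hw0
    set u0 : {i // ¬ p i} := ⟨i0, not_not_intro rfl⟩ with hu0
    set v' : {k // k ≠ k0} → {i // p i} := fun k => ⟨v k.1, fun h => k.2 (hv h)⟩ with hv'def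
    set w' : {k // k ≠ k0} → {i // p i} :=
      fun k => ⟨w k.1, fun h => hvw k0 k.1 (hk0' k.1) h.symm⟩ with hw'def
    set S' := {x : {i // p i} → AddCircle (1:ℝ) | ∀ k, ‖x (v' k) - x (w' k)‖ ≤ ε/2} with hS'
    have hS'm : MeasurableSet S' := by
      have : S' = ⋂ k, {x : {i // p i} → AddCircle (1:ℝ) | ‖x (v' k) - x (w' k)‖ ≤ ε/2} := by
        ext x; simp [hS']
      rw [this]
      exact MeasurableSet.iInter fun k => meas_pair_set _ _ _
    set T' := {xy : ({i // p i} → AddCircle (1:ℝ)) × ({i // ¬ p i} → AddCircle (1:ℝ)) |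
      xy.1 ∈ S' ∧ ‖xy.2 u0 - xy.1 w0‖ ≤ ε/2} with hT'
    have hT'm : MeasurableSet T' := by
      apply MeasurableSet.inter
      · exact measurable_fst hS'm
      · have : Measurable fun xy : ({i // p i} → AddCircle (1:ℝ)) × ({i // ¬ p i} → AddCircle (1:ℝ)) =>
            ‖xy.2 u0 - xy.1 w0‖ :=
          (((measurable_pi_apply u0).comp measurable_snd).sub
            ((measurable_pi_apply w0).comp measurable_fst)).norm
        exact measurableSet_le this measurable_const
    -- symm application facts
    have hsymm1 : ∀ (x : {i // p i} → AddCircle (1:ℝ)) (y : {i // ¬ p i} → AddCircle (1:ℝ))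
        (i : ι) (h : p i), e.symm (x, y) i = x ⟨i, h⟩ := by
      intro x y i h
      show (if h : p i then x ⟨i, h⟩ else y ⟨i, h⟩) = x ⟨i, h⟩
      exact dif_pos h
    have hsymm2 : ∀ (x : {i // p i} → AddCircle (1:ℝ)) (y : {i // ¬ p i} → AddCircle (1:ℝ))
        (i : ι) (h : ¬ p i), e.symm (x, y) i = y ⟨i, h⟩ := by
      intro x y i h
      show (if h' : p i then x ⟨i, h'⟩ else y ⟨i, h'⟩) = y ⟨i, h⟩
      exact dif_neg h
    have hsub : e.symm ⁻¹' S ⊆ T' := by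
      rintro ⟨x, y⟩ hxy
      have hψ : ∀ k, ‖e.symm (x, y) (v k) - e.symm (x, y) (w k)‖ ≤ ε/2 := hxy
      constructor
      · intro k
        have := hψ k.1
        rw [hsymm1 x y (v k.1) (v' k).2, hsymm1 x y (w k.1) (w' k).2] at this
        exact this
      · have := hψ k0
        rw [hsymm2 x y (v k0) (not_not_intro rfl), hsymm1 x y (w k0) hwk0] at this
        exact this
    -- measure computation
    haveI : Unique {i // ¬ p i} :=
      ⟨⟨u0⟩, fun a => Subtype.ext (not_not.mp a.2)⟩
    have slice_bound : ∀ x, μ₂ (Prod.mk x ⁻¹' T') ≤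
        S'.indicator (fun _ => ENNReal.ofReal ε) x := by
      intro x
      by_cases hx : x ∈ S'
      · rw [Set.indicator_of_mem hx]
        have hpre : Prod.mk x ⁻¹' T' = {y : {i // ¬ p i} → AddCircle (1:ℝ) |
            ‖y u0 - x w0‖ ≤ ε/2} := by
          ext y; simp [hT', hx]
        rw [hpre]
        have hmp2 : MeasurePreserving (MeasurableEquiv.funUnique {i // ¬ p i} (AddCircle (1:ℝ)))
            μ₂ AddCircle.haarAddCircle := by
          rw [hμ₂]
          have hfu := measurePreserving_funUnique
            (AddCircle.haarAddCircle : Measure (AddCircle (1:ℝ))) {i // ¬ p i}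
          convert hfu using 2
        have hAm : MeasurableSet {z : AddCircle (1:ℝ) | ‖z - x w0‖ ≤ ε/2} := by
          have : Measurable fun z : AddCircle (1:ℝ) => ‖z - x w0‖ :=
            (measurable_id.sub measurable_const).norm
          exact measurableSet_le this measurable_const
        have hpre2 : {y : {i // ¬ p i} → AddCircle (1:ℝ) | ‖y u0 - x w0‖ ≤ ε/2}
            = (MeasurableEquiv.funUnique {i // ¬ p i} (AddCircle (1:ℝ))) ⁻¹'
              {z : AddCircle (1:ℝ) | ‖z - x w0‖ ≤ ε/2} := by
          ext y
          have hd : (default : {i // ¬ p i}) = u0 := Subsingleton.elim _ _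
          simp [MeasurableEquiv.funUnique, Equiv.funUnique, hd]
        rw [hpre2, hmp2.measure_preimage hAm.nullMeasurableSet,
          haar_ball_measure _ hε0 hε1]
      · rw [Set.indicator_of_notMem hx]
        have hpre : Prod.mk x ⁻¹' T' = (∅ : Set ({i // ¬ p i} → AddCircle (1:ℝ))) := by
          ext y; simp [hT', hx]
        simp [hpre]
    have hcard' : Fintype.card {k // k ≠ k0} = n := by
      have h1 : Fintype.card {k // ¬ (k = k0)} = Fintype.card J - Fintype.card {k // k = k0} :=
        Fintype.card_subtype_compl _
      rw [Fintype.card_subtype_eq] at h1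
      have : Fintype.card {k // k ≠ k0} = Fintype.card {k // ¬ (k = k0)} := rfl
      omega
    have hIH : μ₁ S' ≤ ENNReal.ofReal ε ^ n := by
      apply IH {i // p i} {k // k ≠ k0} v' w' (fun k => ρ k.1) hcard'
      · intro a b h
        exact Subtype.ext (hv (congrArg Subtype.val h))
      · intro k k' h heq
        exact hvw k.1 k'.1 h (congrArg Subtype.val heq)
    calc μ S = (μ₁.prod μ₂) (e.symm ⁻¹' S) :=
          ((MeasurePreserving.symm e hmp).measure_preimage hSm.nullMeasurableSet).symm
      _ ≤ (μ₁.prod μ₂) T' := measure_mono hsub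
      _ = ∫⁻ x, μ₂ (Prod.mk x ⁻¹' T') ∂μ₁ := Measure.prod_apply hT'm
      _ ≤ ∫⁻ x, S'.indicator (fun _ => ENNReal.ofReal ε) x ∂μ₁ := lintegral_mono slice_bound
      _ = ENNReal.ofReal ε * μ₁ S' := by
          rw [lintegral_indicator_const hS'm]
      _ ≤ ENNReal.ofReal ε * ENNReal.ofReal ε ^ n := by
          exact mul_le_mul_right hIH _
      _ = ENNReal.ofReal ε ^ (n+1) := by ring


/-! ### The explicit spanning forest inside `E₀₁` -/

abbrev Jt (L q : ℕ) := Fin q × (Fin L ⊕ Fin (2*L-1))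

def usite (L b n : ℕ) : Torus L :=
  ((((n+1)/2 : ℕ) : ZMod L), ((4*b+1 : ℕ) : ZMod L) - ((n/2 : ℕ) : ZMod L))

def vsite (L b t : ℕ) : Torus L :=
  (((t : ℕ) : ZMod L), ((4*b : ℕ) : ZMod L) - ((t : ℕ) : ZMod L))

def vmapD (L q : ℕ) : Jt L q → Torus L
  | (b, .inl t) => vsite L b t
  | (b, .inr n) => usite L b n

def wmapD (L q : ℕ) : Jt L q → Torus L
  | (b, .inl t) => vsite L b t + (1, 0)
  | (b, .inr n) => usite L b (n+1)

def rhoD (L q : ℕ) : Jt L q → ℕ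
  | (_, .inl _) => 0
  | (_, .inr n) => n + 1

lemma diag_usite (L b n : ℕ) :
    (usite L b n).1 + (usite L b n).2 = ((4*b+1+n%2 : ℕ) : ZMod L) := by
  have h : (n+1)/2 = n/2 + n%2 := by omega
  simp only [usite, h]
  push_cast
  ring

lemma diag_vsite (L b t : ℕ) :
    (vsite L b t).1 + (vsite L b t).2 = ((4*b : ℕ) : ZMod L) := by
  simp only [vsite]; ring

lemma diag_vsite' (L b t : ℕ) :
    (vsite L b t + (1,0)).1 + (vsite L b t + (1,0)).2 = ((4*b+1 : ℕ) : ZMod L) := by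
  simp only [vsite, Prod.fst_add, Prod.snd_add]
  push_cast
  ring

lemma natCast_zmod_inj {L a a' : ℕ} (h : a < L) (h' : a' < L)
    (he : (a : ZMod L) = (a' : ZMod L)) : a = a' := by
  haveI : NeZero L := ⟨by omega⟩
  have := congrArg ZMod.val he
  rwa [ZMod.val_natCast_of_lt h, ZMod.val_natCast_of_lt h'] at this

lemma band_inj {L q b b' r r' : ℕ} (hLq : L = 4*q) (hb : b < q) (hb' : b' < q)
    (hr : r ≤ 2) (hr' : r' ≤ 2)
    (he : ((4*b+r : ℕ) : ZMod L) = ((4*b'+r' : ℕ) : ZMod L)) : b = b' ∧ r = r' := by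
  have := natCast_zmod_inj (a := 4*b+r) (a' := 4*b'+r') (by omega) (by omega) he
  omega

lemma usite_inj {L q b b' n n' : ℕ} (hLq : L = 4*q) (hb : b < q) (hb' : b' < q)
    (hn : n ≤ 2*L - 1) (hn' : n' ≤ 2*L - 1)
    (he : usite L b n = usite L b' n') : b = b' ∧ n = n' := by
  have hq : 1 ≤ q := by omega
  have hd := congrArg (fun x : Torus L => x.1 + x.2) he
  simp only [diag_usite] at hd
  have hd' : ((4*b+(1+n%2) : ℕ) : ZMod L) = ((4*b'+(1+n'%2) : ℕ) : ZMod L) := by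
    rw [show 4*b+(1+n%2) = 4*b+1+n%2 by ring, show 4*b'+(1+n'%2) = 4*b'+1+n'%2 by ring]
    exact hd
  obtain ⟨hbb, hrr⟩ := band_inj hLq hb hb' (by omega) (by omega) hd'
  have h2 := congrArg Prod.snd he
  simp only [usite] at h2
  rw [hbb] at h2
  have h3 : ((n/2 : ℕ) : ZMod L) = ((n'/2 : ℕ) : ZMod L) := sub_right_injective h2
  have h4 := natCast_zmod_inj (a := n/2) (a' := n'/2) (by omega) (by omega) h3
  exact ⟨hbb, by omega⟩

lemma vsite_inj {L q b b' t t' : ℕ} (hLq : L = 4*q) (hb : b < q) (hb' : b' < q)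
    (ht : t < L) (ht' : t' < L)
    (he : vsite L b t = vsite L b' t') : b = b' ∧ t = t' := by
  have hd := congrArg (fun x : Torus L => x.1 + x.2) he
  simp only [diag_vsite] at hd
  have hd' : ((4*b+0 : ℕ) : ZMod L) = ((4*b'+0 : ℕ) : ZMod L) := by simpa using hd
  obtain ⟨hbb, -⟩ := band_inj hLq hb hb' (by omega) (by omega) hd'
  have h1 := congrArg Prod.fst he
  simp only [vsite] at h1
  exact ⟨hbb, natCast_zmod_inj ht ht' h1⟩

lemma vsite_ne_usite {L q b b' t n : ℕ} (hLq : L = 4*q) (hb : b < q) (hb' : b' < q) :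
    vsite L b t ≠ usite L b' n := by
  intro he
  have hd := congrArg (fun x : Torus L => x.1 + x.2) he
  simp only [diag_vsite, diag_usite] at hd
  have hd' : ((4*b+0 : ℕ) : ZMod L) = ((4*b'+(1+n%2) : ℕ) : ZMod L) := by
    rw [show 4*b'+(1+n%2) = 4*b'+1+n%2 by ring]; simpa using hd
  obtain ⟨-, hrr⟩ := band_inj hLq hb hb' (by omega) (by omega) hd'
  omega

lemma vsite_ne_wsite {L q b b' t t' : ℕ} (hLq : L = 4*q) (hb : b < q) (hb' : b' < q) :
    vsite L b t ≠ vsite L b' t' + (1,0) := by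
  intro he
  have hd := congrArg (fun x : Torus L => x.1 + x.2) he
  simp only [diag_vsite, diag_vsite'] at hd
  have hd' : ((4*b+0 : ℕ) : ZMod L) = ((4*b'+1 : ℕ) : ZMod L) := by simpa using hd
  obtain ⟨-, hrr⟩ := band_inj hLq hb hb' (by omega) (by omega) hd'
  omega

lemma usite_succ_even (L b n : ℕ) (hn : n % 2 = 0) :
    usite L b (n+1) = usite L b n + (1, 0) := by
  have h1 : (n+1+1)/2 = (n+1)/2 + 1 := by omega
  have h2 : (n+1)/2 = n/2 := by omega
  apply Prod.ext
  · simp only [usite, h1, h2, Prod.fst_add]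
    push_cast; ring
  · simp only [usite, h1, h2, Prod.snd_add]
    push_cast; ring

lemma usite_succ_odd (L b n : ℕ) (hn : n % 2 = 1) :
    usite L b (n+1) + (0, 1) = usite L b n := by
  have h1 : (n+1+1)/2 = (n+1)/2 := by omega
  have h2 : (n+1)/2 = n/2 + 1 := by omega
  apply Prod.ext
  · simp only [usite, h1, h2, Prod.fst_add]
    push_cast; ring
  · simp only [usite, h1, h2, Prod.snd_add]
    push_cast; ring

end
end AuxProof

/-- the chessboard event `A^#` has measure at most `ε^{(3/4)L² − cL}`. -/
theorem toy_Asharp_measure_upper_bound :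
    ∃ c : ℝ, 0 ≤ c ∧ ∀ L : ℕ, ∀ hdvd : (4 : ℕ) ∣ L, ∀ hL : 4 ≤ L,
      ∀ ε : ℝ, 0 < ε → ε < 1 / 4 →
      haveI : NeZero L := ⟨by omega⟩
      toyMeasure L (Asharp L hdvd ε) ≤
        ENNReal.ofReal (ε ^ ((3 / 4 : ℝ) * (L : ℝ) ^ 2 - c * L)) := by
  refine ⟨1/4, by norm_num, ?_⟩
  intro L hdvd hL ε hε0 hε14
  haveI : NeZero L := ⟨by omega⟩
  obtain ⟨q, hLq⟩ := id hdvd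
  have hq : 1 ≤ q := by omega
  -- injectivity of the fresh endpoints
  have hv : Function.Injective (vmapD L q) := by
    rintro ⟨b, t | n⟩ ⟨b', t' | n'⟩ he
    · obtain ⟨h1, h2⟩ := vsite_inj hLq b.2 b'.2 t.2 t'.2 he
      simp only [Prod.mk.injEq, Sum.inl.injEq]
      exact ⟨Fin.val_injective h1, Fin.val_injective h2⟩
    · exact absurd he (vsite_ne_usite hLq b.2 b'.2)
    · exact absurd he.symm (vsite_ne_usite hLq b'.2 b.2)
    · obtain ⟨h1, h2⟩ := usite_inj hLq b.2 b'.2 (by omega) (by omega) he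
      simp only [Prod.mk.injEq, Sum.inr.injEq]
      exact ⟨Fin.val_injective h1, Fin.val_injective h2⟩
  have hvw : ∀ k k', rhoD L q k ≤ rhoD L q k' → vmapD L q k ≠ wmapD L q k' := by
    rintro ⟨b, t | n⟩ ⟨b', t' | n'⟩ h he
    · exact vsite_ne_wsite hLq b.2 b'.2 he
    · exact vsite_ne_usite hLq b.2 b'.2 he
    · exact absurd h (by simp [rhoD])
    · have hb : (n : ℕ) + 1 ≤ (n' : ℕ) + 1 := h
      obtain ⟨-, h2⟩ := usite_inj hLq b.2 b'.2 (by omega) (by omega) he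
      omega
  -- the chessboard event forces all the forest bonds to be ordered
  have hsub : Asharp L hdvd ε ⊆
      {φ : Config L | ∀ k, ‖φ (vmapD L q k) - φ (wmapD L q k)‖ ≤ ε/2} := by
    intro φ hφ
    rintro ⟨b, t | n⟩
    · have hres : residue4 L hdvd (vsite L (b : ℕ) (t : ℕ)) = 0 := by
        unfold residue4
        rw [diag_vsite, map_natCast]
        push_cast
        rw [show (4 : ZMod 4) = 0 by decide]
        ring
      have hbond := (hφ (vsite L (b : ℕ) (t : ℕ)) 0).1 (Or.inl hres)
      have hc0 : vsite L (b : ℕ) (t : ℕ) + coordVec L 0 = vsite L (b : ℕ) (t : ℕ) + (1,0) := rfl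
      unfold IsOrderedBond at hbond
      rw [hc0] at hbond
      exact hbond
    · rcases Nat.mod_two_eq_zero_or_one (n : ℕ) with hpar | hpar
      · have hres : residue4 L hdvd (usite L (b : ℕ) (n : ℕ)) = 1 := by
          unfold residue4
          rw [diag_usite, hpar, map_natCast]
          push_cast
          rw [show (4 : ZMod 4) = 0 by decide]
          ring
        have hbond := (hφ (usite L (b : ℕ) (n : ℕ)) 0).1 (Or.inr hres)
        unfold IsOrderedBond at hbond
        have hc0 : usite L (b : ℕ) (n : ℕ) + coordVec L 0
            = usite L (b : ℕ) ((n : ℕ)+1) := by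
          rw [usite_succ_even L (b : ℕ) (n : ℕ) hpar]; rfl
        rw [hc0] at hbond
        exact hbond
      · have hres : residue4 L hdvd (usite L (b : ℕ) ((n : ℕ)+1)) = 1 := by
          unfold residue4
          rw [diag_usite]
          have : ((n : ℕ)+1) % 2 = 0 := by omega
          rw [this, map_natCast]
          push_cast
          rw [show (4 : ZMod 4) = 0 by decide]
          ring
        have hbond := (hφ (usite L (b : ℕ) ((n : ℕ)+1)) 1).1 (Or.inr hres)
        unfold IsOrderedBond at hbond
        have hc1 : usite L (b : ℕ) ((n : ℕ)+1) + coordVec L 1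
            = usite L (b : ℕ) (n : ℕ) := by
          rw [← usite_succ_odd L (b : ℕ) (n : ℕ) hpar]; rfl
        rw [hc1] at hbond
        show ‖φ (usite L (b : ℕ) (n : ℕ)) - φ (usite L (b : ℕ) ((n : ℕ)+1))‖ ≤ ε/2
        rw [norm_sub_rev]
        exact hbond
  -- apply the forest bound
  have hcore := core_bound ε hε0.le (by linarith) (Fintype.card (Jt L q)) (Torus L) (Jt L q)
    (vmapD L q) (wmapD L q) (rhoD L q) rfl hv hvw
  have hcard : Fintype.card (Jt L q) = q * (L + (2*L-1)) := by
    simp [Jt]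
  have hexp : (3 / 4 : ℝ) * (L : ℝ) ^ 2 - (1/4) * (L : ℝ) = (Fintype.card (Jt L q) : ℝ) := by
    rw [hcard]
    subst hLq
    have h1 : 4*q + (2*(4*q) - 1) = 12*q - 1 := by omega
    rw [h1]
    push_cast [Nat.cast_sub (show 1 ≤ 12*q by omega)]
    ring
  have hrw : ENNReal.ofReal (ε ^ ((3 / 4 : ℝ) * (L : ℝ) ^ 2 - (1/4) * (L : ℝ)))
      = ENNReal.ofReal ε ^ (Fintype.card (Jt L q)) := by
    rw [hexp, Real.rpow_natCast, ENNReal.ofReal_pow hε0.le]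
  calc toyMeasure L (Asharp L hdvd ε)
      ≤ toyMeasure L {φ : Config L | ∀ k, ‖φ (vmapD L q k) - φ (wmapD L q k)‖ ≤ ε/2} :=
        measure_mono hsub
    _ ≤ ENNReal.ofReal ε ^ (Fintype.card (Jt L q)) := hcore
    _ = ENNReal.ofReal (ε ^ ((3 / 4 : ℝ) * (L : ℝ) ^ 2 - (1/4) * (L : ℝ))) := hrw.symm
end
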